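/- With Q as above (α, β > 0, A > 0, B ≥ 0, power-law ψ, φ, Λ = ψ + φ ≥ A^α > 0), define Q̃(u, u_b, v) = Q(u - u_b, u_b, v) for 0 ≤ u_b ≤ u. Then ∂_{u_b} Q̃(u, u_b, v) = -∂₁Q(u-u_b, u_b, v) + ∂₂Q(u-u_b, u_b, v) ≥ 1 for all admissible (u, u_b, v). Consequently, if u_b, u_b' ∈ [0, u] and Q̃(u, u_b', v) = 0, then |u_b - u_b'| ≤ |Q̃(u, u_b, v)|. -/

import Mathlib

open Real

private lemma hasDerivAt_rpow_comp {f : ℝ → ℝ} {f' p x : ℝ} (hf : HasDerivAt f f' x)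
    (h : f x ≠ 0 ∨ 1 ≤ p) :
    HasDerivAt (fun y => f y ^ p) (p * f x ^ (p - 1) * f') x := by
  exact (Real.hasDerivAt_rpow_const h).comp x hf

private lemma alg_ge_one (t w ψ φ ψd φd : ℝ) (ht : 0 ≤ t) (hw : 0 ≤ w)
    (hψ : 0 ≤ ψ) (hφ : 0 < φ) (hψd : 0 ≤ ψd) (hφd : 0 ≤ φd) :
    1 ≤ ((ψd * t + ψ + (φd * w + φ)) * (ψ + φ) - (ψ * t - φ * w) * (ψd - φd)) / (ψ + φ) ^ 2 := by
  have hΛ : 0 < ψ + φ := by linarith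
  rw [le_div_iff₀ (by positivity)]
  nlinarith [mul_nonneg (mul_nonneg hψd ht) hφ.le, mul_nonneg (mul_nonneg hψd hw) hφ.le,
    mul_nonneg (mul_nonneg hφd ht) hψ, mul_nonneg (mul_nonneg hφd hw) hψ]

theorem Qtilde_derivative_and_distance (α β A B a' b' c' d' : ℝ)
    (hα : 0 < α) (hβ : 0 < β) (hA : 0 < A) (hB : 0 ≤ B) (hBβ : β < 1 → 0 < B)
    (ha' : 0 ≤ a') (hb' : 0 ≤ b') (hc' : 0 ≤ c') (hd' : 0 ≤ d')
    (Q : ℝ → ℝ → ℝ → ℝ)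
    (hQ : ∀ u_a u_b v, Q u_a u_b v =
      ((B + (b' * u_b + d' * v)) ^ β * u_b - (A + (a' * u_a + c' * v)) ^ α * u_a) /
        ((B + (b' * u_b + d' * v)) ^ β + (A + (a' * u_a + c' * v)) ^ α)) :
    ∀ u u_b v : ℝ, 0 ≤ u_b → u_b ≤ u → 0 ≤ v →
      (deriv (fun t => Q (u - t) t v) u_b
        = -(deriv (fun s => Q s u_b v) (u - u_b))
          + deriv (fun t => Q (u - u_b) t v) u_b ∧
       1 ≤ deriv (fun t => Q (u - t) t v) u_b) ∧
      (∀ u_b' : ℝ, u_b' ∈ Set.Icc 0 u → Q (u - u_b') u_b' v = 0 →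
        |u_b - u_b'| ≤ |Q (u - u_b) u_b v|) := by
  intro u u_b v hub hubu hv
  have hu : 0 ≤ u := le_trans hub hubu
  -- abbreviations (as plain definitions via `let`-free approach)
  set g : ℝ → ℝ := fun t =>
    ((B + (b' * t + d' * v)) ^ β * t - (A + (a' * (u - t) + c' * v)) ^ α * (u - t)) /
      ((B + (b' * t + d' * v)) ^ β + (A + (a' * (u - t) + c' * v)) ^ α) with hg
  set Dv : ℝ → ℝ := fun t =>
    (((β * (B + (b' * t + d' * v)) ^ (β - 1) * b') * t + (B + (b' * t + d' * v)) ^ β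
        + ((α * (A + (a' * (u - t) + c' * v)) ^ (α - 1) * a') * (u - t)
          + (A + (a' * (u - t) + c' * v)) ^ α))
      * ((B + (b' * t + d' * v)) ^ β + (A + (a' * (u - t) + c' * v)) ^ α)
      - ((B + (b' * t + d' * v)) ^ β * t - (A + (a' * (u - t) + c' * v)) ^ α * (u - t))
        * ((β * (B + (b' * t + d' * v)) ^ (β - 1) * b')
          - (α * (A + (a' * (u - t) + c' * v)) ^ (α - 1) * a')))
      / ((B + (b' * t + d' * v)) ^ β + (A + (a' * (u - t) + c' * v)) ^ α) ^ 2 with hDv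
  -- basic positivity facts at a point t ∈ [0,u]
  have hpb_nonneg : ∀ t : ℝ, 0 ≤ t → 0 ≤ B + (b' * t + d' * v) := fun t ht => by
    have := mul_nonneg hb' ht; have := mul_nonneg hd' hv; linarith
  have hpb_case : ∀ t : ℝ, 0 ≤ t → (B + (b' * t + d' * v) ≠ 0 ∨ 1 ≤ β) := by
    intro t ht
    rcases eq_or_ne (B + (b' * t + d' * v)) 0 with h0 | h0
    · right
      by_contra hlt
      push_neg at hlt
      have hBpos := hBβ hlt
      have := mul_nonneg hb' ht; have := mul_nonneg hd' hv
      linarith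
    · exact Or.inl h0
  have hqa_pos : ∀ t : ℝ, t ≤ u → 0 < A + (a' * (u - t) + c' * v) := fun t htu => by
    have := mul_nonneg ha' (by linarith : (0:ℝ) ≤ u - t); have := mul_nonneg hc' hv; linarith
  -- derivative of g at any point of [0,u]
  have key : ∀ t : ℝ, 0 ≤ t → t ≤ u → HasDerivAt g (Dv t) t := by
    intro t ht htu
    have h1 : HasDerivAt (fun t : ℝ => B + (b' * t + d' * v)) b' t := by
      simpa using (((hasDerivAt_id t).const_mul b').add_const (d' * v)).const_add B
    have h2 : HasDerivAt (fun t : ℝ => A + (a' * (u - t) + c' * v)) (-a') t := by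
      simpa using ((((hasDerivAt_const t u).sub (hasDerivAt_id t)).const_mul a').add_const
        (c' * v)).const_add A
    have hψ : HasDerivAt (fun t : ℝ => (B + (b' * t + d' * v)) ^ β)
        (β * (B + (b' * t + d' * v)) ^ (β - 1) * b') t :=
      hasDerivAt_rpow_comp h1 (hpb_case t ht)
    have hφ : HasDerivAt (fun t : ℝ => (A + (a' * (u - t) + c' * v)) ^ α)
        (α * (A + (a' * (u - t) + c' * v)) ^ (α - 1) * (-a')) t :=
      hasDerivAt_rpow_comp h2 (Or.inl (ne_of_gt (hqa_pos t htu)))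
    have hnum : HasDerivAt
        (fun t : ℝ => (B + (b' * t + d' * v)) ^ β * t
          - (A + (a' * (u - t) + c' * v)) ^ α * (u - t))
        ((β * (B + (b' * t + d' * v)) ^ (β - 1) * b') * t + (B + (b' * t + d' * v)) ^ β * 1
          - ((α * (A + (a' * (u - t) + c' * v)) ^ (α - 1) * (-a')) * (u - t)
            + (A + (a' * (u - t) + c' * v)) ^ α * (0 - 1))) t :=
      (hψ.mul (hasDerivAt_id t)).sub (hφ.mul ((hasDerivAt_const t u).sub (hasDerivAt_id t)))
    have hden : HasDerivAt
        (fun t : ℝ => (B + (b' * t + d' * v)) ^ β + (A + (a' * (u - t) + c' * v)) ^ α)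
        ((β * (B + (b' * t + d' * v)) ^ (β - 1) * b')
          + (α * (A + (a' * (u - t) + c' * v)) ^ (α - 1) * (-a'))) t := hψ.add hφ
    have hΛ : ((B + (b' * t + d' * v)) ^ β + (A + (a' * (u - t) + c' * v)) ^ α) ≠ 0 := by
      have h3 : (0:ℝ) ≤ (B + (b' * t + d' * v)) ^ β := Real.rpow_nonneg (hpb_nonneg t ht) β
      have h4 : (0:ℝ) < (A + (a' * (u - t) + c' * v)) ^ α :=
        Real.rpow_pos_of_pos (hqa_pos t htu) α
      positivity
    have := hnum.div hden hΛ
    simp only [Pi.div_def] at this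
    rw [hg, hDv]
    refine this.congr_deriv ?_
    beta_reduce
    ring
  -- bound Dv
  have keyge : ∀ t : ℝ, 0 ≤ t → t ≤ u → 1 ≤ Dv t := by
    intro t ht htu
    rw [hDv]
    exact alg_ge_one t (u - t) _ _ _ _ ht (by linarith)
      (Real.rpow_nonneg (hpb_nonneg t ht) β) (Real.rpow_pos_of_pos (hqa_pos t htu) α)
      (mul_nonneg (mul_nonneg hβ.le (Real.rpow_nonneg (hpb_nonneg t ht) _)) hb')
      (mul_nonneg (mul_nonneg hα.le (Real.rpow_nonneg (hqa_pos t htu).le _)) ha')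
  have hub' : (u_b:ℝ) ∈ Set.Icc (0:ℝ) u := ⟨hub, hubu⟩
  -- partial derivatives at the point
  have hqa0 : 0 < A + (a' * (u - u_b) + c' * v) := hqa_pos u_b hubu
  have hψ0 : (0:ℝ) ≤ (B + (b' * u_b + d' * v)) ^ β := Real.rpow_nonneg (hpb_nonneg u_b hub) β
  have hφ0 : (0:ℝ) < (A + (a' * (u - u_b) + c' * v)) ^ α := Real.rpow_pos_of_pos hqa0 α
  have hΛ0 : ((B + (b' * u_b + d' * v)) ^ β + (A + (a' * (u - u_b) + c' * v)) ^ α) ≠ 0 := by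
    positivity
  constructor
  · constructor
    · -- chain rule decomposition
      -- ∂₁ : s ↦ Q s u_b v at s₀ = u - u_b
      have h3 : HasDerivAt (fun s : ℝ => A + (a' * s + c' * v)) a' (u - u_b) := by
        simpa using (((hasDerivAt_id (u - u_b)).const_mul a').add_const (c' * v)).const_add A
      have hφ1 : HasDerivAt (fun s : ℝ => (A + (a' * s + c' * v)) ^ α)
          (α * (A + (a' * (u - u_b) + c' * v)) ^ (α - 1) * a') (u - u_b) :=
        hasDerivAt_rpow_comp h3 (Or.inl (ne_of_gt hqa0))
      have hd1 : HasDerivAt (fun s : ℝ =>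
          ((B + (b' * u_b + d' * v)) ^ β * u_b - (A + (a' * s + c' * v)) ^ α * s) /
            ((B + (b' * u_b + d' * v)) ^ β + (A + (a' * s + c' * v)) ^ α))
          (((0 - ((α * (A + (a' * (u - u_b) + c' * v)) ^ (α - 1) * a') * (u - u_b)
              + (A + (a' * (u - u_b) + c' * v)) ^ α * 1))
            * ((B + (b' * u_b + d' * v)) ^ β + (A + (a' * (u - u_b) + c' * v)) ^ α)
            - ((B + (b' * u_b + d' * v)) ^ β * u_b
                - (A + (a' * (u - u_b) + c' * v)) ^ α * (u - u_b))
              * (0 + α * (A + (a' * (u - u_b) + c' * v)) ^ (α - 1) * a'))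
            / ((B + (b' * u_b + d' * v)) ^ β + (A + (a' * (u - u_b) + c' * v)) ^ α) ^ 2)
          (u - u_b) :=
        ((hasDerivAt_const (u - u_b) ((B + (b' * u_b + d' * v)) ^ β * u_b)).sub
          (hφ1.mul (hasDerivAt_id (u - u_b)))).div
          ((hasDerivAt_const (u - u_b) ((B + (b' * u_b + d' * v)) ^ β)).add hφ1) hΛ0
      -- ∂₂ : t ↦ Q (u - u_b) t v at u_b
      have h4 : HasDerivAt (fun t : ℝ => B + (b' * t + d' * v)) b' u_b := by
        simpa using (((hasDerivAt_id u_b).const_mul b').add_const (d' * v)).const_add B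
      have hψ2 : HasDerivAt (fun t : ℝ => (B + (b' * t + d' * v)) ^ β)
          (β * (B + (b' * u_b + d' * v)) ^ (β - 1) * b') u_b :=
        hasDerivAt_rpow_comp h4 (hpb_case u_b hub)
      have hd2 : HasDerivAt (fun t : ℝ =>
          ((B + (b' * t + d' * v)) ^ β * t
            - (A + (a' * (u - u_b) + c' * v)) ^ α * (u - u_b)) /
            ((B + (b' * t + d' * v)) ^ β + (A + (a' * (u - u_b) + c' * v)) ^ α))
          ((((β * (B + (b' * u_b + d' * v)) ^ (β - 1) * b') * u_b
              + (B + (b' * u_b + d' * v)) ^ β * 1 - 0)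
            * ((B + (b' * u_b + d' * v)) ^ β + (A + (a' * (u - u_b) + c' * v)) ^ α)
            - ((B + (b' * u_b + d' * v)) ^ β * u_b
                - (A + (a' * (u - u_b) + c' * v)) ^ α * (u - u_b))
              * (β * (B + (b' * u_b + d' * v)) ^ (β - 1) * b' + 0))
            / ((B + (b' * u_b + d' * v)) ^ β + (A + (a' * (u - u_b) + c' * v)) ^ α) ^ 2)
          u_b :=
        (((hψ2.mul (hasDerivAt_id u_b)).sub
          (hasDerivAt_const u_b ((A + (a' * (u - u_b) + c' * v)) ^ α * (u - u_b)))).div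
          (hψ2.add (hasDerivAt_const u_b ((A + (a' * (u - u_b) + c' * v)) ^ α))) hΛ0)
      have e0 : deriv (fun t => Q (u - t) t v) u_b = Dv u_b := by
        have : (fun t => Q (u - t) t v) = g := by
          funext t; rw [hQ, hg]
        rw [this, (key u_b hub hubu).deriv]
      have f1eq : (fun s => Q s u_b v) = (fun s : ℝ =>
          ((B + (b' * u_b + d' * v)) ^ β * u_b - (A + (a' * s + c' * v)) ^ α * s) /
            ((B + (b' * u_b + d' * v)) ^ β + (A + (a' * s + c' * v)) ^ α)) := by
        funext s; rw [hQ]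
      have f2eq : (fun t => Q (u - u_b) t v) = (fun t : ℝ =>
          ((B + (b' * t + d' * v)) ^ β * t
            - (A + (a' * (u - u_b) + c' * v)) ^ α * (u - u_b)) /
            ((B + (b' * t + d' * v)) ^ β + (A + (a' * (u - u_b) + c' * v)) ^ α)) := by
        funext t; rw [hQ]
      rw [e0, f1eq, f2eq, hd1.deriv, hd2.deriv, hDv]
      field_simp
      ring
    · -- lower bound
      have : (fun t => Q (u - t) t v) = g := by
        funext t; rw [hQ, hg]
      rw [this, (key u_b hub hubu).deriv]
      exact keyge u_b hub hubu
  · -- distance estimate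
    intro u_b' hub' hzero
    have hz : g u_b' = 0 := by rw [hg]; rw [hQ] at hzero; exact hzero
    have hQg : Q (u - u_b) u_b v = g u_b := by rw [hQ, hg]
    rw [hQg]
    have hmvt : ∀ x ∈ Set.Icc (0:ℝ) u, ∀ y ∈ Set.Icc (0:ℝ) u, x ≤ y →
        1 * (y - x) ≤ g y - g x := by
      apply (convex_Icc (0:ℝ) u).mul_sub_le_image_sub_of_le_deriv
      · intro x hx
        exact (key x hx.1 hx.2).continuousAt.continuousWithinAt
      · intro x hx
        rw [interior_Icc] at hx
        exact (key x hx.1.le hx.2.le).differentiableAt.differentiableWithinAt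
      · intro x hx
        rw [interior_Icc] at hx
        rw [(key x hx.1.le hx.2.le).deriv]
        exact keyge x hx.1.le hx.2.le
    rcases le_total u_b u_b' with h | h
    · have := hmvt u_b ⟨hub, hubu⟩ u_b' hub' h
      rw [hz] at this
      have h1 : |u_b - u_b'| = u_b' - u_b := by
        rw [abs_of_nonpos (by linarith)]; ring
      have h2 : g u_b ≤ -(u_b' - u_b) := by linarith
      calc |u_b - u_b'| = u_b' - u_b := h1
        _ ≤ -(g u_b) := by linarith
        _ ≤ |g u_b| := neg_le_abs _
    · have := hmvt u_b' hub' u_b ⟨hub, hubu⟩ h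
      rw [hz] at this
      have h1 : |u_b - u_b'| = u_b - u_b' := abs_of_nonneg (by linarith)
      calc |u_b - u_b'| = u_b - u_b' := h1
        _ ≤ g u_b := by linarith
        _ ≤ |g u_b| := le_abs_self _
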